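/- Let q ≥ 1 be an integer and define the smoothing spline equivalent kernel on the real line by K_ss(x, t) = Σ_{j=0}^{q−1} i·exp( i·|x−t|·exp( πi(2j+1)/(2q) ) ) / ( 2q·exp( iπ(2q−1)(2j+1)/(2q) ) ), where i is the imaginary unit. Then for all x, t ∈ ℝ, |K_ss(x, t)| ≤ ((q+1)/(2q)) · exp( −|x − t| · sin(π/(2q)) ). -/

import Mathlib

open Real

/-- The smoothing spline equivalent kernel on the real line:
`K_ss(x,t) = Σ_{j=0}^{q−1} i exp(i|x−t| exp(πi(2j+1)/(2q))) / (2q exp(iπ(2q−1)(2j+1)/(2q)))`. -/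
noncomputable def Kss (q : ℕ) (x t : ℝ) : ℂ :=
  ∑ j ∈ Finset.range q,
    Complex.I *
        Complex.exp (Complex.I * ((|x - t| : ℝ) : ℂ) *
          Complex.exp ((Real.pi : ℂ) * Complex.I * (2 * (j : ℂ) + 1) / (2 * (q : ℂ)))) /
      (2 * (q : ℂ) *
        Complex.exp (Complex.I * (Real.pi : ℂ) * (2 * (q : ℂ) - 1) * (2 * (j : ℂ) + 1) /
          (2 * (q : ℂ))))

lemma sin_angle_bound (q j : ℕ) (hq : 1 ≤ q) (hj : j < q) :
    Real.sin (Real.pi / (2 * q)) ≤ Real.sin (Real.pi * (2 * j + 1) / (2 * q)) := by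
  have hqpos : (0:ℝ) < q := by exact_mod_cast hq
  have h2q : (0:ℝ) < 2 * q := by linarith
  have hpi := Real.pi_pos
  set θ : ℝ := Real.pi * (2 * j + 1) / (2 * q) with hθ
  have hsmall : 0 < Real.pi / (2 * q) := div_pos hpi h2q
  have hθ1 : Real.pi / (2 * q) ≤ θ := by
    rw [hθ]
    gcongr
    nlinarith [Nat.cast_nonneg (α := ℝ) j]
  have hθ2 : θ ≤ Real.pi - Real.pi / (2 * q) := by
    have hjq : (j:ℝ) + 1 ≤ (q:ℝ) := by exact_mod_cast hj
    have key : θ + Real.pi / (2 * q) = Real.pi * (2 * j + 2) / (2 * q) := by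
      rw [hθ]; field_simp; ring
    have : Real.pi * (2 * j + 2) / (2 * q) ≤ Real.pi := by
      rw [div_le_iff₀ h2q]
      nlinarith [mul_le_mul_of_nonneg_left hjq hpi.le]
    linarith
  rcases le_or_gt θ (Real.pi / 2) with h | h
  · exact Real.sin_le_sin_of_le_of_le_pi_div_two (by linarith) h hθ1
  · rw [show Real.sin θ = Real.sin (Real.pi - θ) from (Real.sin_pi_sub θ).symm]
    exact Real.sin_le_sin_of_le_of_le_pi_div_two (by linarith) (by linarith) (by linarith)

lemma norm_term (q j : ℕ) (hq : 1 ≤ q) (r : ℝ) :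
    ‖Complex.I *
        Complex.exp (Complex.I * (r : ℂ) *
          Complex.exp ((Real.pi : ℂ) * Complex.I * (2 * (j : ℂ) + 1) / (2 * (q : ℂ)))) /
      (2 * (q : ℂ) *
        Complex.exp (Complex.I * (Real.pi : ℂ) * (2 * (q : ℂ) - 1) * (2 * (j : ℂ) + 1) /
          (2 * (q : ℂ))))‖
    = 1 / (2 * q) * Real.exp (-r * Real.sin (Real.pi * (2 * j + 1) / (2 * q))) := by
  have hqpos : (0:ℝ) < q := by exact_mod_cast hq
  have hq0 : (q:ℂ) ≠ 0 := by exact_mod_cast hqpos.ne'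
  set θ : ℝ := Real.pi * (2 * j + 1) / (2 * q) with hθ
  have e1 : (Real.pi : ℂ) * Complex.I * (2 * (j : ℂ) + 1) / (2 * (q : ℂ)) = (θ : ℝ) * Complex.I := by
    rw [hθ]; push_cast; field_simp
  set s : ℝ := Real.pi * (2 * q - 1) * (2 * j + 1) / (2 * q) with hs
  have e2 : Complex.I * (Real.pi : ℂ) * (2 * (q : ℂ) - 1) * (2 * (j : ℂ) + 1) / (2 * (q : ℂ)) = (s : ℝ) * Complex.I := by
    rw [hs]; push_cast; field_simp
  rw [e1, e2]
  have re1 : (Complex.I * (r : ℂ) * Complex.exp ((θ : ℝ) * Complex.I)).re = -r * Real.sin θ := by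
    simp [Complex.mul_re, Complex.mul_im, Complex.exp_ofReal_mul_I_re, Complex.exp_ofReal_mul_I_im]
  rw [norm_div, norm_mul, norm_mul]
  simp only [Complex.norm_exp, Complex.norm_I]
  have re2 : ((s:ℝ) * Complex.I : ℂ).re = 0 := by simp
  rw [re1, re2, Real.exp_zero]
  rw [norm_mul, Complex.norm_two, Complex.norm_natCast]
  ring

theorem stmt11 (q : ℕ) (hq : 1 ≤ q) (x t : ℝ) :
    ‖Kss q x t‖ ≤ ((q : ℝ) + 1) / (2 * q) * Real.exp (-|x - t| * Real.sin (Real.pi / (2 * q))) := by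
  have hqpos : (0:ℝ) < q := by exact_mod_cast hq
  set r := |x - t| with hr
  have hrnn : 0 ≤ r := abs_nonneg _
  calc ‖Kss q x t‖ ≤ ∑ j ∈ Finset.range q, (1 / (2 * (q:ℝ)) * Real.exp (-r * Real.sin (Real.pi * (2 * j + 1) / (2 * q)))) := by
        refine (norm_sum_le _ _).trans (le_of_eq ?_)
        exact Finset.sum_congr rfl fun j hj => norm_term q j hq r
    _ ≤ ∑ j ∈ Finset.range q, (1 / (2 * (q:ℝ)) * Real.exp (-r * Real.sin (Real.pi / (2 * q)))) := by
        apply Finset.sum_le_sum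
        intro j hj
        apply mul_le_mul_of_nonneg_left _ (by positivity)
        apply Real.exp_le_exp.2
        have := sin_angle_bound q j hq (Finset.mem_range.1 hj)
        nlinarith
    _ = (q : ℝ) * (1 / (2 * q)) * Real.exp (-r * Real.sin (Real.pi / (2 * q))) := by
        rw [Finset.sum_const, Finset.card_range]; push_cast; ring
    _ ≤ ((q : ℝ) + 1) / (2 * q) * Real.exp (-r * Real.sin (Real.pi / (2 * q))) := by
        apply mul_le_mul_of_nonneg_right _ (Real.exp_pos _).le
        rw [mul_one_div, div_le_div_iff₀ (by positivity) (by positivity)]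
        nlinarith
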